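/- No metric basis of the hypercube Q_d contains two antipodal vertices; that is, if S is a metric generator of Q_d of minimum cardinality, then S does not contain a pair of vertices differing in all d coordinates. -/

import Mathlib

/-- Distance from a vertex `s` to an edge `e` (as an element of `Sym2 V`):
the minimum of the distances from `s` to the two endpoints of `e`. -/
noncomputable def edgeDist {V : Type*} (G : SimpleGraph V) (e : Sym2 V) (s : V) : ℕ :=
  Sym2.lift ⟨fun x y => min (G.dist x s) (G.dist y s), fun _ _ => min_comm _ _⟩ e

/-- `S` is a metric generator for `G`: every pair of distinct vertices is
distinguished by some element of `S`. -/
def IsMetricGen {V : Type*} (G : SimpleGraph V) (S : Set V) : Prop :=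
  ∀ u v : V, u ≠ v → ∃ s ∈ S, G.dist s u ≠ G.dist s v

/-- `S` is an edge metric generator for `G`: every pair of distinct edges is
distinguished by some element of `S`. -/
def IsEdgeMetricGen {V : Type*} (G : SimpleGraph V) (S : Set V) : Prop :=
  ∀ e₁ ∈ G.edgeSet, ∀ e₂ ∈ G.edgeSet, e₁ ≠ e₂ → ∃ s ∈ S, edgeDist G e₁ s ≠ edgeDist G e₂ s

/-- Distance from a vertex `s` to a mixed element (a vertex or an edge). -/
noncomputable def mixedDist {V : Type*} (G : SimpleGraph V) (a : V ⊕ Sym2 V) (s : V) : ℕ :=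
  Sum.elim (fun w => G.dist s w) (fun e => edgeDist G e s) a

/-- A mixed element is valid if it is a vertex, or an actual edge of `G`. -/
def IsMixedElem {V : Type*} (G : SimpleGraph V) (a : V ⊕ Sym2 V) : Prop :=
  Sum.elim (fun _ => True) (fun e => e ∈ G.edgeSet) a

/-- `S` is a mixed metric generator for `G`: every pair of distinct elements of
`V(G) ∪ E(G)` is distinguished by some element of `S`. -/
def IsMixedMetricGen {V : Type*} (G : SimpleGraph V) (S : Set V) : Prop :=
  ∀ a b : V ⊕ Sym2 V, IsMixedElem G a → IsMixedElem G b → a ≠ b →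
    ∃ s ∈ S, mixedDist G a s ≠ mixedDist G b s

/-- The metric dimension: minimum cardinality of a metric generator. -/
noncomputable def metricDim {V : Type*} [Fintype V] (G : SimpleGraph V) : ℕ :=
  sInf {n | ∃ S : Finset V, S.card = n ∧ IsMetricGen G ↑S}

/-- The edge metric dimension: minimum cardinality of an edge metric generator. -/
noncomputable def edgeMetricDim {V : Type*} [Fintype V] (G : SimpleGraph V) : ℕ :=
  sInf {n | ∃ S : Finset V, S.card = n ∧ IsEdgeMetricGen G ↑S}

/-- The mixed metric dimension: minimum cardinality of a mixed metric generator. -/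
noncomputable def mixedMetricDim {V : Type*} [Fintype V] (G : SimpleGraph V) : ℕ :=
  sInf {n | ∃ S : Finset V, S.card = n ∧ IsMixedMetricGen G ↑S}

/-- The hypercube `Q_d`: vertices are binary vectors of length `d`, with two
vertices adjacent iff they differ in exactly one coordinate. -/
def cube (d : ℕ) : SimpleGraph (Fin d → Bool) where
  Adj u v := hammingDist u v = 1
  symm := ⟨fun u v h => by simp only [hammingDist_comm] at h ⊢; exact h⟩
  loopless := ⟨fun u h => by simp only [hammingDist_self] at h; exact one_ne_zero h.symm⟩

open Finset
lemma cube_walk_exists (d : ℕ) : ∀ (n : ℕ) (u v : Fin d → Bool), hammingDist u v = n →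
    ∃ p : (cube d).Walk u v, p.length = n := by
  intro n
  induction n with
  | zero =>
    intro u v h
    rw [hammingDist_eq_zero] at h
    subst h
    exact ⟨.nil, rfl⟩
  | succ n ih =>
    intro u v h
    have hne : u ≠ v := by
      intro e; subst e; simp [hammingDist_self] at h
    obtain ⟨i, hi⟩ : ∃ i, u i ≠ v i := Function.ne_iff.mp hne
    set u' := Function.update u i (v i) with hu'
    have hset : ({j | u' j ≠ v j} : Finset (Fin d)) = ({j | u j ≠ v j} : Finset (Fin d)).erase i := by
      ext j
      simp only [mem_filter, mem_univ, true_and, mem_erase, hu']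
      by_cases hj : j = i
      · subst hj; simp [Function.update_self]
      · simp [Function.update_of_ne hj, hj]
    have h2 : hammingDist u' v = n := by
      unfold hammingDist
      rw [hset, card_erase_of_mem (by simpa using hi)]
      unfold hammingDist at h
      omega
    have h1 : (cube d).Adj u u' := by
      show hammingDist u u' = 1
      unfold hammingDist
      rw [show ({j | u j ≠ u' j} : Finset (Fin d)) = {i} from ?_, card_singleton]
      ext j
      simp only [mem_filter, mem_univ, true_and, mem_singleton, hu']
      by_cases hj : j = i
      · subst hj; simp [Function.update_self, hi]
      · simp [Function.update_of_ne hj, hj]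
    obtain ⟨p, hp⟩ := ih u' v h2
    exact ⟨.cons h1 p, by simp [hp]⟩

lemma cube_hamming_le_walk (d : ℕ) {u v : Fin d → Bool} (p : (cube d).Walk u v) :
    hammingDist u v ≤ p.length := by
  induction p with
  | nil => simp [hammingDist_self]
  | @cons x y z h p ih =>
    have ht := hammingDist_triangle x y z
    have h1 : hammingDist x y = 1 := h
    simp only [SimpleGraph.Walk.length_cons]
    omega

lemma cube_dist (d : ℕ) (u v : Fin d → Bool) : (cube d).dist u v = hammingDist u v := by
  obtain ⟨p, hp⟩ := cube_walk_exists d (hammingDist u v) u v rfl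
  refine le_antisymm (hp ▸ SimpleGraph.dist_le p) ?_
  obtain ⟨q, hq⟩ := (p.reachable).exists_walk_length_eq_dist
  exact hq ▸ cube_hamming_le_walk d q

lemma antipodal_sum (d : ℕ) {a b : Fin d → Bool} (h : ∀ i, a i ≠ b i) (u : Fin d → Bool) :
    hammingDist a u + hammingDist b u = d := by
  have hcompl : (filter (fun i => b i ≠ u i) univ : Finset (Fin d)) =
      (filter (fun i => a i ≠ u i) univ)ᶜ := by
    ext i
    have := h i
    simp only [mem_filter, mem_univ, true_and, mem_compl, not_not]
    cases hA : a i <;> cases hB : b i <;> cases hU : u i <;> simp_all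
  unfold hammingDist
  rw [hcompl, card_add_card_compl]
  simp

/-- No metric basis of `Q_d` (metric generator of minimum
cardinality) contains two antipodal vertices. -/
theorem stmt10 (d : ℕ) (S : Finset (Fin d → Bool))
    (hS : IsMetricGen (cube d) ↑S)
    (hmin : ∀ T : Finset (Fin d → Bool), IsMetricGen (cube d) ↑T → S.card ≤ T.card) :
    ¬ ∃ a ∈ S, ∃ b ∈ S, a ≠ b ∧ ∀ i : Fin d, a i ≠ b i := by
  rintro ⟨a, ha, b, hb, hab, hanti⟩
  have hgen : IsMetricGen (cube d) ↑(S.erase b) := by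
    intro u v huv
    obtain ⟨s, hs, hds⟩ := hS u v huv
    by_cases hsb : s = b
    · subst hsb
      refine ⟨a, by simp [Finset.mem_erase, hab, ha], ?_⟩
      rw [cube_dist, cube_dist]
      rw [cube_dist, cube_dist] at hds
      have h1 := antipodal_sum d hanti u
      have h2 := antipodal_sum d hanti v
      omega
    · exact ⟨s, by simp [Finset.mem_erase, hsb, hs], hds⟩
  have := hmin _ hgen
  rw [Finset.card_erase_of_mem hb] at this
  have : 0 < S.card := Finset.card_pos.mpr ⟨b, hb⟩
  omega
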